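/- Let K = (AP, S, R, S0, I) be a Kripke structure, x ∉ AP, and let K' = (AP ∪ {x}, S', R', S0', I') be x-bisimilar to K via a bisimulation ρ ⊆ S × S'. Then K' is simulated by K || 𝒳 with respect to AP ∪ {x}: the relation ρ^x = {(⟨s, i⟩, t) | ρ(s, t) and the value of x at ⟨s, i⟩ in K || 𝒳 equals I'(t, x)} is a simulation with respect to AP ∪ {x}, and every initial state of K' is related by ρ^x to some initial state of K || 𝒳. -/
import Mathlib


/-- A Kripke structure with a set of initial states. -/
structure KSM where
  S : Type
  AP : Set ℕ
  R : S → S → Prop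
  total : ∀ s, ∃ t, R s t
  inits : Set S
  L : S → Set ℕ
  Lsub : ∀ s, L s ⊆ AP

/-- `ρ` is a simulation with respect to `X` (`K` simulates `K'` via `ρ`). -/
def SimulM (K K' : KSM) (X : Set ℕ) (ρ : K.S → K'.S → Prop) : Prop :=
  ∀ s s', ρ s s' →
    (K.L s ∩ X = K'.L s' ∩ X) ∧ (∀ t', K'.R s' t' → ∃ t, K.R s t ∧ ρ t t')

/-- `ρ` is a bisimulation with respect to `X`. -/
def IsBisimM (K K' : KSM) (X : Set ℕ) (ρ : K.S → K'.S → Prop) : Prop :=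
  SimulM K K' X ρ ∧ SimulM K' K X (fun s' s => ρ s s')

/-- The structure `𝒳` : two states, the complete transition relation, the
single atomic proposition `x` (false in state `false`, true in state `true`),
both states initial. -/
def chiM (x : ℕ) : KSM where
  S := Bool
  AP := {x}
  R := fun _ _ => True
  total := fun s => ⟨s, trivial⟩
  inits := Set.univ
  L := fun b => if b then {x} else ∅
  Lsub := by intro b; cases b <;> simp

/-- Parallel synchronous composition. -/
def parCompM (K1 K2 : KSM) : KSM where
  S := K1.S × K2.S
  AP := K1.AP ∪ K2.AP
  R := fun p q => K1.R p.1 q.1 ∧ K2.R p.2 q.2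
  total := by
    rintro ⟨s, t⟩
    obtain ⟨s', hs⟩ := K1.total s
    obtain ⟨t', ht⟩ := K2.total t
    exact ⟨(s', t'), hs, ht⟩
  inits := K1.inits ×ˢ K2.inits
  L := fun p => K1.L p.1 ∪ K2.L p.2
  Lsub := fun p => Set.union_subset_union (K1.Lsub p.1) (K2.Lsub p.2)

theorem stmt_14 (K K' : KSM) (hf : Finite K.S) (hf' : Finite K'.S)
    (x : ℕ) (hx : x ∉ K.AP) (hAP' : K'.AP = K.AP ∪ {x})
    (ρ : K.S → K'.S → Prop)
    (hbis : IsBisimM K K' K.AP ρ)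
    (hinit : ∀ t ∈ K'.inits, ∃ s ∈ K.inits, ρ s t)
    (hinit' : ∀ s ∈ K.inits, ∃ t ∈ K'.inits, ρ s t) :
    SimulM (parCompM K (chiM x)) K' (K.AP ∪ {x})
      (fun p t => ρ p.1 t ∧ (x ∈ (parCompM K (chiM x)).L p ↔ x ∈ K'.L t)) ∧
    (∀ t ∈ K'.inits, ∃ p ∈ (parCompM K (chiM x)).inits,
      ρ p.1 t ∧ (x ∈ (parCompM K (chiM x)).L p ↔ x ∈ K'.L t)) := by

  classical
  obtain ⟨hsim, hsim'⟩ := hbis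
  constructor
  · rintro ⟨s, b⟩ t ⟨hρ, hxiff⟩
    obtain ⟨hlab, _⟩ := hsim s t hρ
    constructor
    · ext a
      simp only [parCompM, chiM, Set.mem_inter_iff, Set.mem_union] at *
      by_cases hax : a = x
      · subst hax
        constructor
        · rintro ⟨ha, _⟩
          exact ⟨hxiff.1 ha, Or.inr rfl⟩
        · rintro ⟨ha, _⟩
          exact ⟨hxiff.2 ha, Or.inr rfl⟩
      · constructor
        · rintro ⟨ha, hap⟩
          rcases hap with hap | hap
          · rcases ha with ha | ha
            · have : a ∈ K.L s ∩ K.AP := ⟨ha, hap⟩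
              rw [hlab] at this
              exact ⟨this.1, Or.inl hap⟩
            · cases b <;> simp at ha <;> exact absurd ha hax
          · exact absurd hap hax
        · rintro ⟨ha, hap⟩
          rcases hap with hap | hap
          · have : a ∈ K'.L t ∩ K.AP := ⟨ha, hap⟩
            rw [← hlab] at this
            exact ⟨Or.inl this.1, Or.inl hap⟩
          · exact absurd hap hax
    · intro t' ht'
      obtain ⟨_, hstep⟩ := hsim s t hρ
      obtain ⟨u, hu, hρu⟩ := hstep t' ht'
      refine ⟨(u, if x ∈ K'.L t' then true else false), ⟨hu, trivial⟩, hρu, ?_⟩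
      by_cases h : x ∈ K'.L t' <;> simp [parCompM, chiM, h]
      intro hxL
      exact absurd (K.Lsub u hxL) hx
  · intro t ht
    obtain ⟨s, hs, hρ⟩ := hinit t ht
    refine ⟨(s, if x ∈ K'.L t then true else false), ⟨hs, trivial⟩, hρ, ?_⟩
    by_cases h : x ∈ K'.L t <;> simp [parCompM, chiM, h]
    intro hxL
    exact absurd (K.Lsub s hxL) hx
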